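/- Let A ∈ ℝ^{d×p}, B ∈ ℝ^{d×q}, m_A = (1/p) A 1_p, m_B = (1/q) B 1_q, and let M̄_B ∈ ℝ^{d×p} be the matrix whose every column is m_B, and M̄_A ∈ ℝ^{d×q} the matrix whose every column is m_A. Then ‖A − M̄_B‖_F² + ‖B − M̄_A‖_F² = ‖[A B] Ψ‖_F², where Ψ ∈ ℝ^{(p+q)×(p+q)} is the block matrix with blocks Ψ_{11} = I_p, Ψ_{12} = −(1/p) 1_p 1_q^T, Ψ_{21} = −(1/q) 1_q 1_p^T, Ψ_{22} = I_q. -/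

import Mathlib

open Matrix BigOperators

def frobSq {α β : Type*} [Fintype α] [Fintype β] (M : Matrix α β ℝ) : ℝ :=
  ∑ i, ∑ j, (M i j) ^ 2

/-- `‖A − M̄_B‖_F² + ‖B − M̄_A‖_F² = ‖[A B] Ψ‖_F²` where `M̄_B` (resp. `M̄_A`)
repeats the column mean of `B` (resp. `A`), and `Ψ` is the block matrix with
blocks `I_p`, `−(1/p) 1_p 1_qᵀ`, `−(1/q) 1_q 1_pᵀ`, `I_q`. -/
theorem cross_mean_deviation_eq_block_product
    {d p q : ℕ} (hp : 0 < p) (hq : 0 < q)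
    (A : Matrix (Fin d) (Fin p) ℝ) (B : Matrix (Fin d) (Fin q) ℝ) :
    let mA : Fin d → ℝ := fun i => (p : ℝ)⁻¹ * ∑ j, A i j
    let mB : Fin d → ℝ := fun i => (q : ℝ)⁻¹ * ∑ j, B i j
    let MB : Matrix (Fin d) (Fin p) ℝ := Matrix.of fun i _ => mB i
    let MA : Matrix (Fin d) (Fin q) ℝ := Matrix.of fun i _ => mA i
    let Ψ : Matrix (Fin p ⊕ Fin q) (Fin p ⊕ Fin q) ℝ :=
      Matrix.fromBlocks 1 (-((p : ℝ)⁻¹ • (Matrix.of fun _ _ => (1 : ℝ))))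
        (-((q : ℝ)⁻¹ • (Matrix.of fun _ _ => (1 : ℝ)))) 1
    frobSq (A - MB) + frobSq (B - MA) = frobSq (Matrix.fromCols A B * Ψ) := by
  intro mA mB MB MA Ψ
  have key : Matrix.fromCols A B * Ψ = Matrix.fromCols (A - MB) (B - MA) := by
    rw [show Ψ = Matrix.fromBlocks 1 (-((p : ℝ)⁻¹ • (Matrix.of fun _ _ => (1 : ℝ))))
        (-((q : ℝ)⁻¹ • (Matrix.of fun _ _ => (1 : ℝ)))) 1 from rfl,
      Matrix.fromCols_mul_fromBlocks]
    ext i j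
    rcases j with j | j
    · simp [Matrix.fromCols, Matrix.mul_apply, MB, mB, Finset.mul_sum, mul_comm, ← Finset.sum_mul, sub_eq_add_neg, add_comm]
    · simp [Matrix.fromCols, Matrix.mul_apply, MA, mA, Finset.mul_sum, mul_comm, ← Finset.sum_mul, sub_eq_add_neg, add_comm]
  rw [key]
  simp [frobSq, Fintype.sum_sum_type, Matrix.fromCols, Finset.sum_add_distrib]
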